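/- Fix a sequence of pairs {(N_k, B_k)}_{k≥1} with integers N_k ≥ 2 and finite sets B_k ⊆ [0,∞), a sequence of positive integers n = {n_k}, and ω ∈ ℕ^ℕ. If the infinite convolution μ(ω) = δ_{N_{ω₁}^{-1}B_{ω₁}} * δ_{(N_{ω₁}N_{ω₂})^{-1}B_{ω₂}} * ⋯ exists (i.e., the partial convolutions converge weakly), then for every sequence n of positive integers the infinite convolution μⁿ(ω) = δ_{N_{ω₁}^{-n₁}B_{ω₁}} * δ_{N_{ω₁}^{-n₁}N_{ω₂}^{-n₂}B_{ω₂}} * ⋯ also exists. -/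

import Mathlib

open MeasureTheory Filter Topology

/-- The convolution of two Borel measures on `ℝ`. -/
noncomputable def convM (μ ν : Measure ℝ) : Measure ℝ :=
  (μ.prod ν).map fun p => p.1 + p.2

/-- The uniformly distributed discrete measure `δ_A = (1/#A) ∑_{a ∈ A} δ_a`. -/
noncomputable def uniformM (A : Finset ℝ) : Measure ℝ :=
  ((A.card : ENNReal))⁻¹ • ∑ a ∈ A, Measure.dirac a

/-- The partial convolutions `ν_n = δ_{A_0} * δ_{A_1} * ⋯ * δ_{A_n}`. -/
noncomputable def partialConv (A : ℕ → Finset ℝ) : ℕ → Measure ℝ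
  | 0 => uniformM (A 0)
  | n + 1 => convM (partialConv A n) (uniformM (A (n + 1)))

/-- Weak convergence of a sequence of Borel measures on `ℝ`. -/
def WTendsto (μs : ℕ → Measure ℝ) (μ : Measure ℝ) : Prop :=
  ∀ f : BoundedContinuousFunction ℝ ℝ,
    Tendsto (fun k => ∫ x, f x ∂(μs k)) atTop (𝓝 (∫ x, f x ∂μ))

open Set




lemma uniformM_apply (A : Finset ℝ) {s : Set ℝ} (hs : MeasurableSet s) :
    uniformM A s = ((A.card : ENNReal))⁻¹ * ∑ a ∈ A, s.indicator 1 a := by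
  rw [uniformM, Measure.smul_apply, Measure.finset_sum_apply]
  simp only [smul_eq_mul]
  congr 1
  exact Finset.sum_congr rfl fun a _ => Measure.dirac_apply' a hs

lemma uniformM_fin (A : Finset ℝ) : IsFiniteMeasure (uniformM A) := by
  constructor
  rw [uniformM_apply A MeasurableSet.univ]
  by_cases h : A.card = 0
  · simp [h]
  · simp only [indicator_univ, Pi.one_apply, Finset.sum_const, nsmul_eq_mul, mul_one]
    rw [ENNReal.inv_mul_cancel (by exact_mod_cast h) (by simp)]
    exact ENNReal.one_lt_top

lemma uniformM_prob {A : Finset ℝ} (h : A.Nonempty) : IsProbabilityMeasure (uniformM A) := by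
  constructor
  rw [uniformM_apply A MeasurableSet.univ]
  simp only [indicator_univ, Pi.one_apply, Finset.sum_const, nsmul_eq_mul, mul_one]
  exact ENNReal.inv_mul_cancel (by exact_mod_cast h.card_ne_zero) (by simp)

lemma convM_prob (μ ν : Measure ℝ) [IsProbabilityMeasure μ] [IsProbabilityMeasure ν] :
    IsProbabilityMeasure (convM μ ν) := by
  constructor
  rw [convM, Measure.map_apply (by fun_prop) MeasurableSet.univ, Set.preimage_univ,
    ← Set.univ_prod_univ, Measure.prod_prod]
  simp

lemma convM_apply_Iic (μ : Measure ℝ) [SFinite μ] (A : Finset ℝ) (x : ℝ) :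
    convM μ (uniformM A) (Iic x)
      = ((A.card : ENNReal))⁻¹ * ∑ b ∈ A, μ (Iic (x - b)) := by
  have : IsFiniteMeasure (uniformM A) := uniformM_fin A
  rw [convM, Measure.map_apply (by fun_prop) measurableSet_Iic,
    Measure.prod_apply (measurable_add measurableSet_Iic)]
  have hslice : ∀ a : ℝ, (Prod.mk a ⁻¹' ((fun p : ℝ × ℝ => p.1 + p.2) ⁻¹' Iic x))
      = Iic (x - a) := by
    intro a; ext b
    simp only [mem_preimage, mem_Iic]
    constructor
    · intro h; linarith
    · intro h; linarith
  simp_rw [hslice]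
  have huni : ∀ a : ℝ, uniformM A (Iic (x - a))
      = ((A.card : ENNReal))⁻¹ * ∑ b ∈ A, (Iic (x - b)).indicator (1 : ℝ → ENNReal) a := by
    intro a
    rw [uniformM_apply A measurableSet_Iic]
    congr 1
    refine Finset.sum_congr rfl fun b _ => ?_
    by_cases h : b ≤ x - a
    · rw [indicator_of_mem (by exact h : b ∈ Iic (x-a)),
        indicator_of_mem (by simp only [mem_Iic]; linarith : a ∈ Iic (x-b))]
      rfl
    · rw [indicator_of_notMem (by exact h : b ∉ Iic (x-a)),
        indicator_of_notMem (by simp only [mem_Iic]; intro hc; exact h (by linarith))]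
  simp_rw [huni]
  rw [lintegral_const_mul _ (by
    exact Finset.measurable_sum _ fun b _ => (measurable_one.indicator measurableSet_Iic))]
  congr 1
  rw [lintegral_finset_sum _ (fun b _ => (measurable_one.indicator measurableSet_Iic))]
  refine Finset.sum_congr rfl fun b _ => ?_
  exact lintegral_indicator_one measurableSet_Iic


lemma partialConv_prob (A : ℕ → Finset ℝ) (hA : ∀ k, (A k).Nonempty) (n : ℕ) :
    IsProbabilityMeasure (partialConv A n) := by
  induction n with
  | zero => exact uniformM_prob (hA 0)
  | succ n ih =>
    have := uniformM_prob (hA (n + 1))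
    exact convM_prob _ _

lemma partialConv_succ_Iic (A : ℕ → Finset ℝ) (hA : ∀ k, (A k).Nonempty) (n : ℕ) (x : ℝ) :
    partialConv A (n + 1) (Iic x)
      = (((A (n + 1)).card : ENNReal))⁻¹ * ∑ b ∈ A (n + 1), partialConv A n (Iic (x - b)) := by
  have := partialConv_prob A hA n
  exact convM_apply_Iic _ _ x

lemma uniformM_image_Iic (B : Finset ℝ) (g : ℝ → ℝ) (hg : Set.InjOn g B) (x : ℝ) :
    uniformM (B.image g) (Iic x)
      = ((B.card : ENNReal))⁻¹ * ∑ b ∈ B, (Iic x).indicator 1 (g b) := by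
  rw [uniformM_apply _ measurableSet_Iic, Finset.card_image_of_injOn hg,
    Finset.sum_image (fun a ha b hb h => hg ha hb h)]

lemma partialConv_image_succ_Iic (B : ℕ → Finset ℝ) (hB : ∀ k, (B k).Nonempty)
    (g : ℕ → ℝ → ℝ) (hg : ∀ k, Set.InjOn (g k) (B k)) (n : ℕ) (x : ℝ) :
    partialConv (fun k => (B k).image (g k)) (n + 1) (Iic x)
      = (((B (n + 1)).card : ENNReal))⁻¹
        * ∑ b ∈ B (n + 1), partialConv (fun k => (B k).image (g k)) n (Iic (x - g (n + 1) b)) := by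
  rw [partialConv_succ_Iic _ (fun k => (hB k).image _) n x,
    Finset.card_image_of_injOn (hg (n + 1)),
    Finset.sum_image (fun a ha b hb h => hg (n + 1) ha hb h)]

/-- CDF comparison: pointwise smaller (nonneg-shifted) atoms give larger CDF. -/
lemma partialConv_cdf_le (B : ℕ → Finset ℝ) (hB : ∀ k, (B k).Nonempty)
    (g g' : ℕ → ℝ → ℝ) (hg : ∀ k, Set.InjOn (g k) (B k)) (hg' : ∀ k, Set.InjOn (g' k) (B k))
    (hle : ∀ k, ∀ b ∈ B k, g' k b ≤ g k b) (n : ℕ) (x : ℝ) :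
    partialConv (fun k => (B k).image (g k)) n (Iic x)
      ≤ partialConv (fun k => (B k).image (g' k)) n (Iic x) := by
  induction n generalizing x with
  | zero =>
    show uniformM _ (Iic x) ≤ uniformM _ (Iic x)
    rw [uniformM_image_Iic _ _ (hg 0), uniformM_image_Iic _ _ (hg' 0)]
    refine mul_le_mul_right (Finset.sum_le_sum fun b hb => ?_) _
    by_cases h : g 0 b ≤ x
    · rw [Set.indicator_of_mem (Set.mem_Iic.2 h),
        Set.indicator_of_mem (Set.mem_Iic.2 (le_trans (hle 0 b hb) h))]
      rfl
    · rw [Set.indicator_of_notMem (fun hc => h (Set.mem_Iic.1 hc))]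
      exact zero_le
  | succ n ih =>
    rw [partialConv_image_succ_Iic B hB g hg, partialConv_image_succ_Iic B hB g' hg']
    refine mul_le_mul_right (Finset.sum_le_sum fun b hb => ?_) _
    exact le_trans (ih _)
      (measure_mono (Iic_subset_Iic.2 (by linarith [hle (n + 1) b hb])))

/-- CDF is antitone in `n` when atoms are nonnegative. -/
lemma partialConv_cdf_antitone (A : ℕ → Finset ℝ) (hA : ∀ k, (A k).Nonempty)
    (hpos : ∀ k, ∀ a ∈ A k, 0 ≤ a) (x : ℝ) :
    Antitone (fun n => partialConv A n (Iic x)) := by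
  refine antitone_nat_of_succ_le fun n => ?_
  rw [partialConv_succ_Iic A hA n x]
  have := partialConv_prob A hA n
  calc (((A (n + 1)).card : ENNReal))⁻¹ * ∑ b ∈ A (n + 1), partialConv A n (Iic (x - b))
      ≤ (((A (n + 1)).card : ENNReal))⁻¹ * ∑ _b ∈ A (n + 1), partialConv A n (Iic x) := by
        refine mul_le_mul_right (Finset.sum_le_sum fun b hb => ?_) _
        exact measure_mono (Iic_subset_Iic.2 (by linarith [hpos (n + 1) b hb]))
    _ = partialConv A n (Iic x) := by
        rw [Finset.sum_const, nsmul_eq_mul, ← mul_assoc,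
          ENNReal.inv_mul_cancel (by exact_mod_cast (hA (n + 1)).card_ne_zero) (by simp),
          one_mul]

lemma partialConv_cdf_zero (A : ℕ → Finset ℝ) (hA : ∀ k, (A k).Nonempty)
    (hpos : ∀ k, ∀ a ∈ A k, 0 ≤ a) (n : ℕ) {x : ℝ} (hx : x < 0) :
    partialConv A n (Iic x) = 0 := by
  induction n generalizing x with
  | zero =>
    show uniformM _ (Iic x) = 0
    rw [uniformM_apply _ measurableSet_Iic]
    have : ∀ a ∈ A 0, (Iic x).indicator (1 : ℝ → ENNReal) a = 0 := fun a ha =>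
      Set.indicator_of_notMem (by simp only [Set.mem_Iic]; nlinarith [hpos 0 a ha]) _
    rw [Finset.sum_congr rfl this]
    simp
  | succ n ih =>
    rw [partialConv_succ_Iic A hA n x]
    have : ∀ b ∈ A (n + 1), partialConv A n (Iic (x - b)) = 0 := fun b hb =>
      ih (by nlinarith [hpos (n + 1) b hb])
    rw [Finset.sum_congr rfl this]
    simp


lemma iUnion_Ioc_succ (t : ℕ → ℝ) (ht : Monotone t) (m : ℕ) :
    (⋃ j ∈ Finset.range m, Ioc (t j) (t (j + 1))) = Ioc (t 0) (t m) := by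
  induction m with
  | zero => simp
  | succ m ih =>
    rw [Finset.range_add_one, Finset.set_biUnion_insert, ih,
      Set.union_comm, Set.Ioc_union_Ioc_eq_Ioc (ht (Nat.zero_le m)) (ht (Nat.le_succ m))]

noncomputable def trap (y : ℝ) : BoundedContinuousFunction ℝ ℝ :=
  BoundedContinuousFunction.mkOfBound
    ⟨fun t => max 0 (min 1 (y - t)), by exact continuous_const.max (continuous_const.min (continuous_const.sub continuous_id))⟩ 1
    (by
      intro a b
      have h1 : ∀ t : ℝ, max 0 (min 1 (y - t)) ∈ Icc (0:ℝ) 1 := fun t =>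
        ⟨le_max_left _ _, max_le zero_le_one (min_le_left _ _)⟩
      have := Real.dist_le_of_mem_Icc (h1 a) (h1 b)
      simpa using this)

lemma trap_apply (y t : ℝ) : trap y t = max 0 (min 1 (y - t)) := rfl

lemma trap_mem_Icc (y t : ℝ) : trap y t ∈ Icc (0:ℝ) 1 :=
  ⟨le_max_left _ _, max_le zero_le_one (min_le_left _ _)⟩

lemma indicator_le_trap (y : ℝ) : (Iic (y - 1)).indicator (fun _ => (1:ℝ)) ≤ trap y := by
  intro t
  by_cases h : t ∈ Iic (y - 1)
  · rw [indicator_of_mem h, trap_apply]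
    have h1 : (1:ℝ) ≤ y - t := by simp only [mem_Iic] at h; linarith
    rw [min_eq_left h1]
    exact le_max_right _ _
  · rw [indicator_of_notMem h]
    exact (trap_mem_Icc y t).1

lemma trap_le_indicator (y : ℝ) : ⇑(trap y) ≤ (Iic y).indicator (fun _ => (1:ℝ)) := by
  intro t
  by_cases h : t ∈ Iic y
  · rw [indicator_of_mem h]
    exact (trap_mem_Icc y t).2
  · rw [indicator_of_notMem h, trap_apply]
    simp only [mem_Iic, not_le] at h
    rw [max_eq_left]
    exact min_le_of_right_le (by linarith)

lemma exists_weak_limit (A : ℕ → Finset ℝ) (hA : ∀ k, (A k).Nonempty)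
    (hpos : ∀ k, ∀ a ∈ A k, 0 ≤ a)
    (htail : Tendsto (fun x : ℝ => ((⨅ m, partialConv A m (Iic x))).toReal) atTop (𝓝 1)) :
    ∃ μ : Measure ℝ, IsProbabilityMeasure μ ∧ WTendsto (partialConv A) μ := by
  have hprob : ∀ m, IsProbabilityMeasure (partialConv A m) := partialConv_prob A hA
  set F : ℝ → ENNReal := fun x => ⨅ m, partialConv A m (Iic x) with hFdef
  have hF1 : ∀ x, F x ≤ 1 := fun x =>
    le_trans (iInf_le _ 0) prob_le_one
  have hFtop : ∀ x, F x ≠ ⊤ := fun x => (lt_of_le_of_lt (hF1 x) ENNReal.one_lt_top).ne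
  have hFx : ∀ x, Tendsto (fun m => partialConv A m (Iic x)) atTop (𝓝 (F x)) := fun x =>
    tendsto_atTop_iInf (partialConv_cdf_antitone A hA hpos x)
  have hFmono : Monotone F := fun x y h =>
    le_iInf fun m => le_trans (iInf_le _ m) (measure_mono (Iic_subset_Iic.2 h))
  have hF0 : ∀ x : ℝ, x < 0 → F x = 0 := fun x hx =>
    le_antisymm (le_trans (iInf_le _ 0) (le_of_eq (partialConv_cdf_zero A hA hpos 0 hx)))
      (zero_le)
  set g : ℝ → ℝ := fun x => (F x).toReal with hgdef
  have hgmono : Monotone g := fun x y h => ENNReal.toReal_mono (hFtop y) (hFmono h)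
  have hg1 : ∀ x, g x ≤ 1 := fun x => by
    simpa using ENNReal.toReal_mono (by simp) (hF1 x)
  have hg0' : ∀ x : ℝ, x < 0 → g x = 0 := fun x hx => by simp [hgdef, hF0 x hx]
  set G := hgmono.stieltjesFunction with hGdef
  have hGatBot : Tendsto G atBot (𝓝 0) := by
    have hev : ∀ᶠ x in atBot, G x = 0 := by
      filter_upwards [eventually_le_atBot (-2 : ℝ)] with x hx
      refine le_antisymm ?_ ?_
      · calc G x ≤ g (x + 1) := hgmono.rightLim_le (by linarith)
          _ = 0 := hg0' _ (by linarith)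
      · calc (0:ℝ) = g (x - 1) := (hg0' _ (by linarith)).symm
          _ ≤ G x := hgmono.le_rightLim (by linarith)
    exact tendsto_const_nhds.congr' (hev.mono fun x hx => hx.symm)
  have hGatTop : Tendsto G atTop (𝓝 1) := by
    have hup : Tendsto (fun x : ℝ => g (x + 1)) atTop (𝓝 1) :=
      htail.comp (tendsto_atTop_add_const_right _ 1 tendsto_id)
    refine tendsto_of_tendsto_of_tendsto_of_le_of_le htail hup
      (fun x => hgmono.le_rightLim le_rfl) (fun x => hgmono.rightLim_le (by linarith))
  have hGprob : IsProbabilityMeasure G.measure := G.isProbabilityMeasure hGatBot hGatTop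
  set D : Set ℝ := {x | ¬ContinuousAt g x} with hDdef
  have hD : D.Countable := hgmono.countable_not_continuousAt
  have hGg : ∀ x ∉ D, G x = g x := by
    intro x hx
    simp only [hDdef, mem_setOf_eq, not_not] at hx
    exact hgmono.continuousWithinAt_Ioi_iff_rightLim_eq.1 (hx.continuousWithinAt)
  -- measure of Ioc with continuity endpoints
  have hIoc : ∀ a b : ℝ, a ∉ D → b ∉ D → G.measure (Ioc a b) = F b - F a := by
    intro a b ha hb
    rw [StieltjesFunction.measure_Ioc, hGg a ha, hGg b hb]
    show ENNReal.ofReal ((F b).toReal - (F a).toReal) = F b - F a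
    rw [ENNReal.ofReal_sub _ ENNReal.toReal_nonneg, ENNReal.ofReal_toReal (hFtop b),
      ENNReal.ofReal_toReal (hFtop a)]
  -- tendsto on continuity intervals
  have hIocTendsto : ∀ a b : ℝ, a ≤ b → a ∉ D → b ∉ D →
      Tendsto (fun m => partialConv A m (Ioc a b)) atTop (𝓝 (G.measure (Ioc a b))) := by
    intro a b hab ha hb
    have hrw : ∀ m, partialConv A m (Ioc a b)
        = partialConv A m (Iic b) - partialConv A m (Iic a) := by
      intro m
      have := hprob m
      rw [← Set.Iic_sdiff_Iic, measure_diff (Iic_subset_Iic.2 hab) measurableSet_Iic.nullMeasurableSet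
        (measure_ne_top _ _)]
    rw [hIoc a b ha hb]
    simp_rw [hrw]
    exact ENNReal.Tendsto.sub (hFx b) (hFx a) (Or.inr (hFtop a))
  -- open set liminf inequality
  have hopen : ∀ U : Set ℝ, IsOpen U →
      G.measure U ≤ atTop.liminf (fun m => partialConv A m U) := by
    intro U hU
    classical
    rw [hU.measure_eq_iSup_isCompact]
    refine iSup_le fun K => iSup_le fun hKU => iSup_le fun hK => ?_
    rcases K.eq_empty_or_nonempty with rfl | hKne
    · simp
    obtain ⟨δ, hδpos, hδ⟩ := hK.exists_thickening_subset_open hU hKU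
    obtain ⟨ε, hεpos, hε1, hεδ⟩ : ∃ ε : ℝ, 0 < ε ∧ ε ≤ 1 ∧ Metric.thickening ε K ⊆ U :=
      ⟨min δ 1, lt_min hδpos one_pos, min_le_right _ _,
        (Metric.thickening_mono (min_le_left _ _) K).trans hδ⟩
    obtain ⟨M, hKM⟩ : ∃ M : ℝ, K ⊆ Icc (-M) M := by
      obtain ⟨R, hR⟩ := hK.isBounded.subset_closedBall 0
      refine ⟨|R| + 1, hR.trans ?_⟩
      rw [Real.closedBall_eq_Icc]
      refine Icc_subset_Icc (by cases abs_cases R <;> simp <;> linarith) ?_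
      cases abs_cases R <;> simp <;> linarith
    obtain ⟨m, s, hs_succ, hs0, hsm⟩ : ∃ (m : ℕ) (s : ℕ → ℝ),
        (∀ j : ℕ, s (j + 1) = s j + ε / 2) ∧ s 0 = -M - 1 ∧ M + 1 ≤ s m := by
      refine ⟨⌈(2 * M + 2) / (ε / 2)⌉₊ + 1, fun j => -M - 1 + j * (ε / 2),
        fun j => by push_cast; ring, by simp, ?_⟩
      have h2 : ((2 * M + 2) / (ε / 2)) ≤ (⌈(2 * M + 2) / (ε / 2)⌉₊ : ℝ) := Nat.le_ceil _
      have h4 : 0 < ε / 2 := by linarith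
      have h5 : 2 * M + 2 ≤ ((⌈(2 * M + 2) / (ε / 2)⌉₊ : ℝ) + 1) * (ε / 2) := by
        calc 2 * M + 2 = ((2 * M + 2) / (ε / 2)) * (ε / 2) := by field_simp
          _ ≤ ((⌈(2 * M + 2) / (ε / 2)⌉₊ : ℝ) + 1) * (ε / 2) := by nlinarith
      push_cast
      nlinarith
    have hchoice : ∀ j : ℕ, ∃ y, y ∈ Ioo (s j) (s j + ε / 4) ∧ y ∉ D := by
      intro j
      have hdense : Dense Dᶜ := hD.dense_compl ℝ
      obtain ⟨y, hy1, hy2⟩ := hdense.exists_mem_open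
        (isOpen_Ioo : IsOpen (Ioo (s j) (s j + ε / 4)))
        (nonempty_Ioo.2 (by linarith))
      exact ⟨y, hy2, hy1⟩
    choose t htmem htD using hchoice
    have hts : StrictMono t := by
      refine strictMono_nat_of_lt_succ fun j => ?_
      have h1 := (htmem j).2
      have h2 := (htmem (j + 1)).1
      have h3 := hs_succ j
      linarith
    have htmono : Monotone t := hts.monotone
    have hwidth : ∀ j, t (j + 1) - t j < ε := by
      intro j
      have h1 := (htmem j).1
      have h2 := (htmem (j + 1)).2
      have h3 := hs_succ j
      linarith
    have hcover : K ⊆ Ioc (t 0) (t m) := by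
      intro x hx
      have hxM := hKM hx
      simp only [mem_Icc] at hxM
      constructor
      · have h1 := (htmem 0).2
        rw [hs0] at h1
        linarith
      · have h1 := (htmem m).1
        linarith
    set J : Finset ℕ := (Finset.range m).filter
      (fun j => (Ioc (t j) (t (j + 1)) ∩ K).Nonempty) with hJdef
    set V : Set ℝ := ⋃ j ∈ J, Ioc (t j) (t (j + 1)) with hVdef
    have hKV : K ⊆ V := by
      intro x hx
      have := hcover hx
      rw [← iUnion_Ioc_succ t htmono m] at this
      simp only [mem_iUnion, Finset.mem_range, exists_prop] at this
      obtain ⟨j, hj, hxj⟩ := this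
      exact mem_biUnion (Finset.mem_filter.2 ⟨Finset.mem_range.2 hj, ⟨x, hxj, hx⟩⟩) hxj
    have hVU : V ⊆ U := by
      refine iUnion₂_subset fun j hj => ?_
      obtain ⟨k, hk1, hk2⟩ := (Finset.mem_filter.1 hj).2
      intro y hy
      refine hεδ (Metric.mem_thickening_iff.2 ⟨k, hk2, ?_⟩)
      rw [Real.dist_eq, abs_sub_lt_iff]
      simp only [mem_Ioc] at hy hk1
      constructor <;> [linarith [hwidth j]; linarith [hwidth j]]
    have hdisj : (J : Set ℕ).PairwiseDisjoint (fun j => Ioc (t j) (t (j + 1))) := by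
      intro i _ j _ hij
      rcases hij.lt_or_gt with h | h
      · exact Set.Ioc_disjoint_Ioc.2
          (le_trans (min_le_left _ _) (le_trans (htmono h) (le_max_right _ _)))
      · exact (Set.Ioc_disjoint_Ioc.2
          (le_trans (min_le_left _ _) (le_trans (htmono h) (le_max_right _ _)))).symm
    have hVsum : ∀ ρ : Measure ℝ, ρ V = ∑ j ∈ J, ρ (Ioc (t j) (t (j + 1))) := by
      intro ρ
      exact measure_biUnion_finset hdisj fun j _ => measurableSet_Ioc
    have hVtendsto : Tendsto (fun k => partialConv A k V) atTop (𝓝 (G.measure V)) := by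
      simp_rw [hVsum]
      exact tendsto_finset_sum _ fun j _ =>
        hIocTendsto (t j) (t (j + 1)) (htmono (Nat.le_succ j)) (htD j) (htD (j + 1))
    calc G.measure K ≤ G.measure V := measure_mono hKV
      _ = atTop.liminf (fun k => partialConv A k V) := (hVtendsto.liminf_eq).symm
      _ ≤ atTop.liminf (fun k => partialConv A k U) :=
          liminf_le_liminf (Eventually.of_forall fun k => measure_mono hVU)
  -- bundle into probability measures and conclude
  refine ⟨G.measure, hGprob, ?_⟩
  set Pν : ProbabilityMeasure ℝ := ⟨G.measure, hGprob⟩ with hPν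
  set Ps : ℕ → ProbabilityMeasure ℝ := fun k => ⟨partialConv A k, hprob k⟩ with hPs
  have htend : atTop.Tendsto Ps (𝓝 Pν) := by
    refine tendsto_of_forall_isOpen_le_liminf fun Uo hUo => ?_
    have h1 := hopen Uo hUo
    rw [← ENNReal.coe_le_coe]
    have aux : ENNReal.ofNNReal (liminf (fun i => Ps i Uo) atTop) =
        liminf (ENNReal.ofNNReal ∘ fun i => Ps i Uo) atTop := by
      refine Monotone.map_liminf_of_continuousAt (F := atTop) ENNReal.coe_mono (Ps · Uo) ?_ ?_ ?_
      · exact ENNReal.continuous_coe.continuousAt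
      · exact IsBoundedUnder.isCoboundedUnder_ge ⟨1, by simp⟩
      · exact ⟨0, by simp⟩
    rw [aux]
    simp only [Function.comp_def, ProbabilityMeasure.ennreal_coeFn_eq_coeFn_toMeasure]
    exact h1
  intro f
  exact ProbabilityMeasure.tendsto_iff_forall_integral_tendsto.mp htend f

lemma div_injOn {c : ℝ} (hc : c ≠ 0) (s : Set ℝ) : Set.InjOn (fun x : ℝ => x / c) s :=
  fun a _ b _ h => by
    have := mul_right_cancel₀ (inv_ne_zero hc) (by simpa [div_eq_mul_inv] using h)
    exact this

lemma integral_trap_le (ρ : Measure ℝ) [IsProbabilityMeasure ρ] (x : ℝ) :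
    ∫ t, trap x t ∂ρ ≤ (ρ (Iic x)).toReal := by
  have h1 : ∫ t, trap x t ∂ρ ≤ ∫ t, (Iic x).indicator (fun _ => (1:ℝ)) t ∂ρ := by
    refine integral_mono ((trap x).integrable ρ) ?_ (trap_le_indicator x)
    exact (integrable_indicator_iff measurableSet_Iic).2
      (integrableOn_const (measure_ne_top _ _))
  calc ∫ t, trap x t ∂ρ ≤ ∫ t, (Iic x).indicator (fun _ => (1:ℝ)) t ∂ρ := h1
    _ = (ρ (Iic x)).toReal := by
        rw [integral_indicator_const (1:ℝ) measurableSet_Iic, smul_eq_mul, mul_one]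
        rfl

lemma le_integral_trap (ρ : Measure ℝ) [IsProbabilityMeasure ρ] (x : ℝ) :
    (ρ (Iic (x - 1))).toReal ≤ ∫ t, trap x t ∂ρ := by
  have h1 : ∫ t, (Iic (x - 1)).indicator (fun _ => (1:ℝ)) t ∂ρ ≤ ∫ t, trap x t ∂ρ := by
    refine integral_mono ?_ ((trap x).integrable ρ) (indicator_le_trap x)
    exact (integrable_indicator_iff measurableSet_Iic).2
      (integrableOn_const (measure_ne_top _ _))
  calc (ρ (Iic (x - 1))).toReal
      = ∫ t, (Iic (x - 1)).indicator (fun _ => (1:ℝ)) t ∂ρ := by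
        rw [integral_indicator_const (1:ℝ) measurableSet_Iic, smul_eq_mul, mul_one]
        rfl
    _ ≤ ∫ t, trap x t ∂ρ := h1

theorem stmt9 (N : ℕ → ℕ) (hN : ∀ k, 2 ≤ N k) (B : ℕ → Finset ℝ)
    (hBne : ∀ k, (B k).Nonempty) (hBpos : ∀ k, ∀ b ∈ B k, 0 ≤ b)
    (ω : ℕ → ℕ) (n : ℕ → ℕ) (hn : ∀ k, 1 ≤ n k)
    (hex : ∃ μ : Measure ℝ, IsProbabilityMeasure μ ∧
      WTendsto (partialConv fun k =>
        (B (ω k)).image fun x => x / ∏ i ∈ Finset.range (k + 1), (N (ω i) : ℝ)) μ) :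
    ∃ μ : Measure ℝ, IsProbabilityMeasure μ ∧
      WTendsto (partialConv fun k =>
        (B (ω k)).image fun x => x / ∏ i ∈ Finset.range (k + 1), (N (ω i) : ℝ) ^ (n i)) μ := by
  obtain ⟨μ, hμ, hw⟩ := hex
  have hone : ∀ i, (1:ℝ) ≤ (N (ω i) : ℝ) := fun i => by
    have := hN (ω i); exact_mod_cast le_trans one_le_two (by exact_mod_cast this)
  have hP1 : ∀ k, (1:ℝ) ≤ ∏ i ∈ Finset.range (k + 1), (N (ω i) : ℝ) := fun k =>
    calc (1:ℝ) = ∏ _i ∈ Finset.range (k + 1), (1:ℝ) := (Finset.prod_const_one).symm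
      _ ≤ _ := Finset.prod_le_prod (fun i _ => zero_le_one) (fun i _ => hone i)
  have hP'1 : ∀ k, (1:ℝ) ≤ ∏ i ∈ Finset.range (k + 1), (N (ω i) : ℝ) ^ (n i) := fun k =>
    calc (1:ℝ) = ∏ _i ∈ Finset.range (k + 1), (1:ℝ) := (Finset.prod_const_one).symm
      _ ≤ _ := Finset.prod_le_prod (fun i _ => zero_le_one) (fun i _ => one_le_pow₀ (hone i))
  have hPle : ∀ k, (∏ i ∈ Finset.range (k + 1), (N (ω i) : ℝ))
      ≤ ∏ i ∈ Finset.range (k + 1), (N (ω i) : ℝ) ^ (n i) := fun k =>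
    Finset.prod_le_prod (fun i _ => by positivity)
      (fun i _ => by
        calc (N (ω i) : ℝ) = (N (ω i) : ℝ) ^ 1 := (pow_one _).symm
          _ ≤ (N (ω i) : ℝ) ^ (n i) := pow_le_pow_right₀ (hone i) (hn i))
  set g : ℕ → ℝ → ℝ := fun k x => x / ∏ i ∈ Finset.range (k + 1), (N (ω i) : ℝ) with hgdef
  set g' : ℕ → ℝ → ℝ := fun k x => x / ∏ i ∈ Finset.range (k + 1), (N (ω i) : ℝ) ^ (n i)
    with hg'def
  have hginj : ∀ k, Set.InjOn (g k) (B (ω k)) := fun k =>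
    div_injOn (by linarith [hP1 k]) _
  have hg'inj : ∀ k, Set.InjOn (g' k) (B (ω k)) := fun k =>
    div_injOn (by linarith [hP'1 k]) _
  have hgle : ∀ k, ∀ b ∈ B (ω k), g' k b ≤ g k b := fun k b hb =>
    div_le_div_of_nonneg_left (hBpos _ b hb) (by linarith [hP1 k]) (hPle k)
  have hBω : ∀ k, (B (ω k)).Nonempty := fun k => hBne (ω k)
  -- the two partial convolution families
  have hcmp : ∀ m x, partialConv (fun k => (B (ω k)).image (g k)) m (Iic x)
      ≤ partialConv (fun k => (B (ω k)).image (g' k)) m (Iic x) :=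
    partialConv_cdf_le (fun k => B (ω k)) hBω g g' hginj hg'inj hgle
  have hpos : ∀ k, ∀ a ∈ (B (ω k)).image (g' k), 0 ≤ a := by
    intro k a ha
    obtain ⟨b, hb, rfl⟩ := Finset.mem_image.1 ha
    exact div_nonneg (hBpos _ b hb) (by linarith [hP'1 k])
  have hposg : ∀ k, ∀ a ∈ (B (ω k)).image (g k), 0 ≤ a := by
    intro k a ha
    obtain ⟨b, hb, rfl⟩ := Finset.mem_image.1 ha
    exact div_nonneg (hBpos _ b hb) (by linarith [hP1 k])
  have hAne : ∀ k, ((B (ω k)).image (g' k)).Nonempty := fun k => (hBω k).image _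
  have hAne' : ∀ k, ((B (ω k)).image (g k)).Nonempty := fun k => (hBω k).image _
  have hprob := partialConv_prob _ hAne'
  have hprob' := partialConv_prob _ hAne
  -- tail estimate
  have htail : Tendsto
      (fun x : ℝ => ((⨅ m, partialConv (fun k => (B (ω k)).image (g' k)) m (Iic x))).toReal)
      atTop (𝓝 1) := by
    have hFtop : ∀ x : ℝ, (⨅ m, partialConv (fun k => (B (ω k)).image (g k)) m (Iic x)) ≠ ⊤ :=
      fun x => ((iInf_le _ 0).trans_lt (by
        have := hprob 0; exact (prob_le_one).trans_lt ENNReal.one_lt_top)).ne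
    have hF'top : ∀ x : ℝ, (⨅ m, partialConv (fun k => (B (ω k)).image (g' k)) m (Iic x)) ≠ ⊤ :=
      fun x => ((iInf_le _ 0).trans_lt (by
        have := hprob' 0; exact (prob_le_one).trans_lt ENNReal.one_lt_top)).ne
    have key : ∀ x : ℝ, (μ (Iic (x - 1))).toReal
        ≤ ((⨅ m, partialConv (fun k => (B (ω k)).image (g k)) m (Iic x))).toReal := by
      intro x
      have h1 : Tendsto
          (fun m => (partialConv (fun k => (B (ω k)).image (g k)) m (Iic x)).toReal) atTop
          (𝓝 ((⨅ m, partialConv (fun k => (B (ω k)).image (g k)) m (Iic x))).toReal) :=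
        (ENNReal.tendsto_toReal (hFtop x)).comp
          (tendsto_atTop_iInf (partialConv_cdf_antitone _ hAne' hposg x))
      have h2 := hw (trap x)
      have h3 : ∀ m, ∫ t, trap x t ∂(partialConv (fun k => (B (ω k)).image (g k)) m)
          ≤ (partialConv (fun k => (B (ω k)).image (g k)) m (Iic x)).toReal := by
        intro m
        have := hprob m
        exact integral_trap_le _ x
      have h5 := le_of_tendsto_of_tendsto' h2 h1 h3
      exact le_trans (le_integral_trap μ x) h5
    have hlow : Tendsto (fun x : ℝ => (μ (Iic (x - 1))).toReal) atTop (𝓝 1) := by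
      have h0 : Tendsto (fun x : ℝ => μ (Iic x)) atTop (𝓝 (μ univ)) :=
        tendsto_measure_Iic_atTop μ
      have h1 : Tendsto (fun x : ℝ => μ (Iic (x - 1))) atTop (𝓝 (μ univ)) :=
        h0.comp (tendsto_atTop_add_const_right _ (-1) tendsto_id)
      have h2 := (ENNReal.tendsto_toReal (measure_ne_top μ univ)).comp h1
      simpa [measure_univ, Function.comp_def] using h2
    refine tendsto_of_tendsto_of_tendsto_of_le_of_le hlow tendsto_const_nhds ?_ ?_
    · intro x
      refine le_trans (key x) (ENNReal.toReal_mono (hF'top x) ?_)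
      exact le_iInf fun m => (iInf_le _ m).trans (hcmp m x)
    · intro x
      have := hprob' 0
      refine ENNReal.toReal_le_of_le_ofReal one_pos.le ?_
      simpa using (iInf_le (fun m => partialConv
        (fun k => (B (ω k)).image (g' k)) m (Iic x)) 0).trans prob_le_one
  exact exists_weak_limit _ hAne hpos htail
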